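/- arXiv:2004.11656 — 3 statements merged into one kernel-verified Lean document; each statement's English description precedes it below -/
import Mathlib

section
/- Let (Ω, 𝓕, P) be a probability space, let ξ, ξ′ : Ω → ℝ be measurable functions such that exp(ξ) and exp(2ξ′) are integrable, let α > 0, and let A ∈ 𝓕. Then ∫_A e^{ξ} dP ≥ e^{−α} ∫_A e^{ξ′} dP − P(|ξ − ξ′| > α)^{1/2} · (∫_Ω e^{2ξ′} dP)^{1/2}. -/
open MeasureTheory

/-- **Exponential comparison inequality (lower bound form).**
If `exp ξ` and `exp (2 ξ')` are integrable and `α > 0`, then for every event `A`,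
`∫_A e^ξ dP ≥ e^{-α} ∫_A e^{ξ'} dP - P(|ξ - ξ'| > α)^{1/2} (∫ e^{2ξ'} dP)^{1/2}`. -/
theorem exp_tilt_comparison_lower
    {Ω : Type*} [MeasurableSpace Ω] (P : Measure Ω) [IsProbabilityMeasure P]
    (ξ ξ' : Ω → ℝ) (hξ : Measurable ξ) (hξ' : Measurable ξ')
    (hint : Integrable (fun ω => Real.exp (ξ ω)) P)
    (hint' : Integrable (fun ω => Real.exp (2 * ξ' ω)) P)
    (α : ℝ) (hα : 0 < α) (A : Set Ω) (hA : MeasurableSet A) :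
    (∫ ω in A, Real.exp (ξ ω) ∂P) ≥
      Real.exp (-α) * (∫ ω in A, Real.exp (ξ' ω) ∂P) -
        Real.sqrt (P {ω | |ξ ω - ξ' ω| > α}).toReal *
          Real.sqrt (∫ ω, Real.exp (2 * ξ' ω) ∂P) := by
  set B : Set Ω := {ω | |ξ ω - ξ' ω| > α} with hBdef
  have hB : MeasurableSet B := measurableSet_lt measurable_const (hξ.sub hξ').abs
  -- exp ξ' is in L².
  have hsq_eq : (fun ω => Real.exp (ξ' ω) ^ 2) = fun ω => Real.exp (2 * ξ' ω) := by
    funext ω; rw [sq, ← Real.exp_add, two_mul]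
  have hg2 : MemLp (fun ω => Real.exp (ξ' ω)) 2 P := by
    refine (memLp_two_iff_integrable_sq (hξ'.exp.aestronglyMeasurable)).2 ?_
    rw [hsq_eq]; exact hint'
  have hexp' : Integrable (fun ω => Real.exp (ξ' ω)) P := hg2.integrable one_le_two
  -- Cauchy–Schwarz: ∫_B e^{ξ'} ≤ √(P B) √(∫ e^{2ξ'}).
  have hpq : (2 : ℝ).HolderConjugate 2 := Real.holderConjugate_iff.mpr ⟨one_lt_two, by norm_num⟩
  have hf2 : MemLp (B.indicator fun _ => (1 : ℝ)) (ENNReal.ofReal 2) P :=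
    memLp_indicator_const _ hB 1 (Or.inr (measure_ne_top P B))
  have hg2' : MemLp (fun ω => Real.exp (ξ' ω)) (ENNReal.ofReal 2) P := by
    convert hg2 using 2; norm_num
  have CS : (∫ ω, (B.indicator (fun _ => (1 : ℝ)) ω) * Real.exp (ξ' ω) ∂P) ≤
      Real.sqrt (P B).toReal * Real.sqrt (∫ ω, Real.exp (2 * ξ' ω) ∂P) := by
    have h := integral_mul_le_Lp_mul_Lq_of_nonneg hpq
      (Filter.Eventually.of_forall fun ω => Set.indicator_nonneg (fun _ _ => zero_le_one) ω)
      (Filter.Eventually.of_forall fun ω => (Real.exp_pos _).le) hf2 hg2'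
    have e1 : (fun ω => (B.indicator (fun _ => (1 : ℝ)) ω) ^ (2 : ℝ)) =
        B.indicator fun _ => (1 : ℝ) := by
      funext ω
      by_cases hω : ω ∈ B <;> simp [Set.indicator_of_mem, Set.indicator_of_notMem, hω]
    have e2 : (fun ω => Real.exp (ξ' ω) ^ (2 : ℝ)) = fun ω => Real.exp (2 * ξ' ω) := by
      funext ω
      rw [← congrFun hsq_eq ω, ← Real.rpow_natCast (Real.exp (ξ' ω)) 2]
      norm_num
    rw [e1, e2] at h
    calc (∫ ω, (B.indicator (fun _ => (1 : ℝ)) ω) * Real.exp (ξ' ω) ∂P)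
        ≤ (∫ ω, B.indicator (fun _ => (1:ℝ)) ω ∂P) ^ (1/(2:ℝ)) *
            (∫ ω, Real.exp (2 * ξ' ω) ∂P) ^ (1/(2:ℝ)) := by
          simpa [e1, e2] using h
      _ = Real.sqrt (P B).toReal * Real.sqrt (∫ ω, Real.exp (2 * ξ' ω) ∂P) := by
          rw [integral_indicator_const _ hB, Real.sqrt_eq_rpow, Real.sqrt_eq_rpow]
          simp [measureReal_def]
  have hBint : (∫ ω in B, Real.exp (ξ' ω) ∂P) ≤
      Real.sqrt (P B).toReal * Real.sqrt (∫ ω, Real.exp (2 * ξ' ω) ∂P) := by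
    refine le_trans (le_of_eq ?_) CS
    rw [← integral_indicator hB]
    congr 1; funext ω
    by_cases hω : ω ∈ B <;> simp [hω]
  -- ∫_{A∩B} ≤ ∫_B
  have hAB_le : (∫ ω in A ∩ B, Real.exp (ξ' ω) ∂P) ≤ ∫ ω in B, Real.exp (ξ' ω) ∂P := by
    apply setIntegral_mono_set hexp'.integrableOn
      (Filter.Eventually.of_forall fun ω => (Real.exp_pos _).le)
    exact Filter.Eventually.of_forall (Set.inter_subset_right)
  -- splitting
  have hsplit : (∫ ω in A ∩ B, Real.exp (ξ' ω) ∂P) + (∫ ω in A \ B, Real.exp (ξ' ω) ∂P)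
      = ∫ ω in A, Real.exp (ξ' ω) ∂P :=
    integral_inter_add_diff hB hexp'.integrableOn
  -- lower bound on the good part
  have hgood : (∫ ω in A \ B, Real.exp (ξ ω) ∂P) ≥
      Real.exp (-α) * ∫ ω in A \ B, Real.exp (ξ' ω) ∂P := by
    rw [← integral_const_mul]
    apply setIntegral_mono_on ((hexp'.const_mul _).integrableOn) hint.integrableOn
      (hA.diff hB)
    intro ω hω
    rw [← Real.exp_add]
    apply Real.exp_le_exp.2
    have h1 : ¬ (|ξ ω - ξ' ω| > α) := hω.2
    have h2 : |ξ ω - ξ' ω| ≤ α := not_lt.1 h1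
    have := abs_le.1 h2
    linarith [this.1]
  have hmono : (∫ ω in A \ B, Real.exp (ξ ω) ∂P) ≤ ∫ ω in A, Real.exp (ξ ω) ∂P := by
    apply setIntegral_mono_set hint.integrableOn
      (Filter.Eventually.of_forall fun ω => (Real.exp_pos _).le)
    exact Filter.Eventually.of_forall (Set.diff_subset)
  -- nonnegativity facts
  have hABnn : 0 ≤ ∫ ω in A ∩ B, Real.exp (ξ' ω) ∂P :=
    integral_nonneg fun ω => (Real.exp_pos _).le
  have hexpα : Real.exp (-α) ≤ 1 := Real.exp_le_one_iff.2 (by linarith)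
  have hexpαnn : (0:ℝ) ≤ Real.exp (-α) := (Real.exp_pos _).le
  nlinarith [hABnn, hexpα, hexpαnn, hgood, hmono, hsplit, hAB_le, hBint,
    mul_le_mul_of_nonneg_left hAB_le hexpαnn]
end

section
/- Let (Ω, 𝓕, P) be a probability space, let ξ, ξ′ : Ω → ℝ be measurable functions such that exp(2ξ) and exp(ξ′) are integrable, let α > 0, and let A ∈ 𝓕. Then ∫_A e^{ξ} dP ≤ e^{α} ∫_A e^{ξ′} dP + P(|ξ − ξ′| > α)^{1/2} · (∫_Ω e^{2ξ} dP)^{1/2}. -/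
open MeasureTheory

/-- **Exponential comparison inequality (upper bound form).**
If `exp (2 ξ)` and `exp ξ'` are integrable and `α > 0`, then for every event `A`,
`∫_A e^ξ dP ≤ e^{α} ∫_A e^{ξ'} dP + P(|ξ - ξ'| > α)^{1/2} (∫ e^{2ξ} dP)^{1/2}`. -/
theorem exp_tilt_comparison_upper
    {Ω : Type*} [MeasurableSpace Ω] (P : Measure Ω) [IsProbabilityMeasure P]
    (ξ ξ' : Ω → ℝ) (hξ : Measurable ξ) (hξ' : Measurable ξ')
    (hint : Integrable (fun ω => Real.exp (2 * ξ ω)) P)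
    (hint' : Integrable (fun ω => Real.exp (ξ' ω)) P)
    (α : ℝ) (hα : 0 < α) (A : Set Ω) (hA : MeasurableSet A) :
    (∫ ω in A, Real.exp (ξ ω) ∂P) ≤
      Real.exp α * (∫ ω in A, Real.exp (ξ' ω) ∂P) +
        Real.sqrt (P {ω | |ξ ω - ξ' ω| > α}).toReal *
          Real.sqrt (∫ ω, Real.exp (2 * ξ ω) ∂P) := by
  set B : Set Ω := {ω | |ξ ω - ξ' ω| > α} with hBdef
  have hB : MeasurableSet B := measurableSet_lt measurable_const ((hξ.sub hξ').abs)
  -- e^ξ is integrable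
  have hintξ : Integrable (fun ω => Real.exp (ξ ω)) P := by
    refine (Integrable.add (integrable_const 1) hint).mono
      (hξ.exp.aestronglyMeasurable) ?_
    filter_upwards with ω
    simp only [Pi.add_apply, Real.norm_eq_abs, abs_of_nonneg (Real.exp_pos _).le]
    rcases le_or_gt (ξ ω) 0 with h | h
    · have h1 : Real.exp (ξ ω) ≤ 1 := Real.exp_le_one_iff.mpr h
      have h2 : (0:ℝ) < Real.exp (2 * ξ ω) := Real.exp_pos _
      rw [abs_of_nonneg (by linarith)]; linarith
    · have h1 : Real.exp (ξ ω) ≤ Real.exp (2 * ξ ω) :=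
        Real.exp_le_exp.mpr (by linarith)
      rw [abs_of_nonneg (by positivity)]; linarith
  have hmemξ : MemLp (fun ω => Real.exp (ξ ω)) 2 P := by
    rw [memLp_two_iff_integrable_sq hξ.exp.aestronglyMeasurable]
    refine hint.congr ?_
    filter_upwards with ω
    rw [sq, ← Real.exp_add]; ring_nf
  -- split
  have hsplit : (∫ ω in A, Real.exp (ξ ω) ∂P) =
      (∫ ω in A ∩ Bᶜ, Real.exp (ξ ω) ∂P) + (∫ ω in A ∩ B, Real.exp (ξ ω) ∂P) := by
    rw [← setIntegral_union (Set.disjoint_left.mpr (fun ω h1 h2 => h1.2 h2.2))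
      (hA.inter hB) hintξ.integrableOn hintξ.integrableOn,
      ← Set.inter_union_distrib_left, Set.compl_union_self, Set.inter_univ]
  -- first piece
  have h1 : (∫ ω in A ∩ Bᶜ, Real.exp (ξ ω) ∂P) ≤
      Real.exp α * (∫ ω in A, Real.exp (ξ' ω) ∂P) := by
    have step1 : (∫ ω in A ∩ Bᶜ, Real.exp (ξ ω) ∂P) ≤
        ∫ ω in A ∩ Bᶜ, Real.exp α * Real.exp (ξ' ω) ∂P := by
      refine setIntegral_mono_on hintξ.integrableOn
        ((hint'.const_mul _).integrableOn) (hA.inter hB.compl) ?_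
      intro ω hω
      have hle : ξ ω - ξ' ω ≤ α := by
        have := hω.2
        simp only [hBdef, Set.mem_compl_iff, Set.mem_setOf_eq, not_lt] at this
        exact (abs_le.mp this).2
      rw [← Real.exp_add]
      exact Real.exp_le_exp.mpr (by linarith)
    have step2 : (∫ ω in A ∩ Bᶜ, Real.exp α * Real.exp (ξ' ω) ∂P) ≤
        ∫ ω in A, Real.exp α * Real.exp (ξ' ω) ∂P := by
      refine setIntegral_mono_set ((hint'.const_mul _).integrableOn) ?_ ?_
      · filter_upwards with ω using by positivity
      · exact HasSubset.Subset.eventuallyLE Set.inter_subset_left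
    calc _ ≤ _ := step1
      _ ≤ _ := step2
      _ = _ := integral_const_mul _ _
  -- second piece : Cauchy-Schwarz
  have h2 : (∫ ω in A ∩ B, Real.exp (ξ ω) ∂P) ≤
      Real.sqrt (P B).toReal * Real.sqrt (∫ ω, Real.exp (2 * ξ ω) ∂P) := by
    have step0 : (∫ ω in A ∩ B, Real.exp (ξ ω) ∂P) ≤ ∫ ω in B, Real.exp (ξ ω) ∂P := by
      refine setIntegral_mono_set hintξ.integrableOn ?_ ?_
      · filter_upwards with ω using (Real.exp_pos _).le
      · exact HasSubset.Subset.eventuallyLE Set.inter_subset_right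
    have hind : (∫ ω in B, Real.exp (ξ ω) ∂P) =
        ∫ ω, B.indicator (fun _ => (1:ℝ)) ω * Real.exp (ξ ω) ∂P := by
      rw [← integral_indicator hB]
      congr 1
      ext ω
      by_cases hω : ω ∈ B <;> simp [hω]
    have hmemInd : MemLp (B.indicator (fun _ => (1:ℝ))) (ENNReal.ofReal 2) P := by
      rw [ENNReal.ofReal_ofNat]
      exact memLp_indicator_const 2 hB 1 (Or.inr (measure_ne_top P B))
    have hCS := integral_mul_le_Lp_mul_Lq_of_nonneg
      (Real.HolderConjugate.two_two : Real.HolderConjugate 2 2)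
      (f := B.indicator (fun _ => (1:ℝ))) (g := fun ω => Real.exp (ξ ω))
      (Filter.Eventually.of_forall fun ω => Set.indicator_nonneg (fun _ _ => zero_le_one) ω)
      (Filter.Eventually.of_forall fun ω => (Real.exp_pos _).le)
      hmemInd (by simpa [ENNReal.ofReal_ofNat] using hmemξ) (μ := P)
    have e1 : (∫ a, B.indicator (fun _ => (1:ℝ)) a ^ (2:ℝ) ∂P) = (P B).toReal := by
      have heq : ∀ a, B.indicator (fun _ => (1:ℝ)) a ^ (2:ℝ)
          = B.indicator (fun _ => (1:ℝ)) a := by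
        intro a; by_cases h : a ∈ B <;> simp [h]
      simp_rw [heq]
      rw [integral_indicator hB]
      simp [measureReal_def]
    have e2 : (∫ a, Real.exp (ξ a) ^ (2:ℝ) ∂P) = ∫ ω, Real.exp (2 * ξ ω) ∂P := by
      congr 1; funext a
      rw [← Real.exp_mul, mul_comm]
    rw [e1, e2, ← Real.sqrt_eq_rpow, ← Real.sqrt_eq_rpow] at hCS
    calc _ ≤ _ := step0
      _ = _ := hind
      _ ≤ _ := hCS
  calc (∫ ω in A, Real.exp (ξ ω) ∂P) = _ := hsplit
    _ ≤ _ := add_le_add h1 h2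
end

section
/- Let H be a separable real Hilbert space, let K ⊆ H be a compact set, and let f : H → H be continuous. Then for every ε > 0 there exists a map g : H → H which is Lipschitz continuous and bounded, with sup_{x ∈ H} ‖g(x)‖ ≤ sup_{x ∈ K} ‖f(x)‖ + ε, and which satisfies ‖g(x) − f(x)‖ ≤ ε for every x ∈ K. -/
open Metric Finset

/-- Helper: a finite sum of Lipschitz maps is Lipschitz (existential form). -/
lemma exists_lip_sum {α E ι : Type*} [PseudoMetricSpace α] [NormedAddCommGroup E]
    (t : Finset ι) (F : ι → α → E)
    (h : ∀ i ∈ t, ∃ L : NNReal, LipschitzWith L (F i)) :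
    ∃ L : NNReal, LipschitzWith L (fun x => ∑ i ∈ t, F i x) := by
  classical
  induction t using Finset.induction_on with
  | empty => exact ⟨0, by simpa using (LipschitzWith.const (0 : E))⟩
  | @insert a s ha ih =>
    obtain ⟨L1, h1⟩ := h a (Finset.mem_insert_self a s)
    obtain ⟨L2, h2⟩ := ih (fun i hi => h i (Finset.mem_insert_of_mem hi))
    exact ⟨L1 + L2, by simpa [Finset.sum_insert ha] using h1.add h2⟩

/-- Helper: product of bounded Lipschitz real functions is Lipschitz. -/
lemma exists_lip_mul {α : Type*} [PseudoMetricSpace α] {f g : α → ℝ} {Lf Lg : NNReal}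
    {A B : ℝ} (hf : LipschitzWith Lf f) (hg : LipschitzWith Lg g)
    (hA : ∀ x, |f x| ≤ A) (hB : ∀ x, |g x| ≤ B) :
    ∃ L : NNReal, LipschitzWith L (fun x => f x * g x) := by
  refine ⟨A.toNNReal * Lg + B.toNNReal * Lf, ?_⟩
  rw [lipschitzWith_iff_dist_le_mul]
  intro x y
  have hfd := hf.dist_le_mul x y
  have hgd := hg.dist_le_mul x y
  rw [Real.dist_eq] at hfd hgd
  rw [Real.dist_eq]
  have key : |f x * g x - f y * g y| ≤ |f x| * |g x - g y| + |g y| * |f x - f y| := by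
    calc |f x * g x - f y * g y| = |f x * (g x - g y) + g y * (f x - f y)| := by ring_nf
    _ ≤ |f x * (g x - g y)| + |g y * (f x - f y)| := abs_add_le _ _
    _ = |f x| * |g x - g y| + |g y| * |f x - f y| := by rw [abs_mul, abs_mul]
  have hA' : |f x| ≤ (A.toNNReal : ℝ) := (hA x).trans (Real.le_coe_toNNReal A)
  have hB' : |g y| ≤ (B.toNNReal : ℝ) := (hB y).trans (Real.le_coe_toNNReal B)
  have hd0 : (0 : ℝ) ≤ dist x y := dist_nonneg
  have hLg0 : (0 : ℝ) ≤ (Lg : ℝ) := Lg.coe_nonneg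
  have hLf0 : (0 : ℝ) ≤ (Lf : ℝ) := Lf.coe_nonneg
  have hAn : (0 : ℝ) ≤ (A.toNNReal : ℝ) := (A.toNNReal).coe_nonneg
  have hBn : (0 : ℝ) ≤ (B.toNNReal : ℝ) := (B.toNNReal).coe_nonneg
  push_cast
  nlinarith [abs_nonneg (g x - g y), abs_nonneg (f x - f y), abs_nonneg (f x), abs_nonneg (g y)]

/-- Helper: reciprocal of a Lipschitz function bounded below by 1 is Lipschitz. -/
lemma lip_inv_of_one_le {α : Type*} [PseudoMetricSpace α] {D : α → ℝ} {L : NNReal}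
    (hD : LipschitzWith L D) (h1 : ∀ x, 1 ≤ D x) :
    LipschitzWith L (fun x => (D x)⁻¹) := by
  rw [lipschitzWith_iff_dist_le_mul] at hD ⊢
  intro x y
  have hx := h1 x
  have hy := h1 y
  have hx0 : (0 : ℝ) < D x := lt_of_lt_of_le one_pos hx
  have hy0 : (0 : ℝ) < D y := lt_of_lt_of_le one_pos hy
  have hDd := hD x y
  rw [Real.dist_eq] at hDd ⊢
  have heq : (D x)⁻¹ - (D y)⁻¹ = (D y - D x) / (D x * D y) := by
    field_simp
  rw [heq, abs_div, abs_of_pos (mul_pos hx0 hy0)]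
  have hden : (1 : ℝ) ≤ D x * D y := by nlinarith
  calc |D y - D x| / (D x * D y) ≤ |D y - D x| / 1 :=
        div_le_div_of_nonneg_left (abs_nonneg _) one_pos hden |>.trans_eq rfl
    _ = |D x - D y| := by rw [div_one, abs_sub_comm]
    _ ≤ L * dist x y := hDd

/-- Helper: scalar function times constant vector. -/
lemma lip_smul_const {α E : Type*} [PseudoMetricSpace α] [NormedAddCommGroup E]
    [NormedSpace ℝ E] {φ : α → ℝ} {L : NNReal} (h : LipschitzWith L φ) (c : E) :
    LipschitzWith (L * ‖c‖₊) (fun x => φ x • c) := by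
  rw [lipschitzWith_iff_dist_le_mul] at h ⊢
  intro x y
  rw [dist_eq_norm, ← sub_smul, norm_smul]
  have := h x y
  rw [Real.dist_eq] at this
  have hc : (0 : ℝ) ≤ ‖c‖ := norm_nonneg c
  calc |φ x - φ y| * ‖c‖ ≤ (L * dist x y) * ‖c‖ :=
        mul_le_mul_of_nonneg_right this hc
    _ = (L * ‖c‖₊ : NNReal) * dist x y := by push_cast; ring

/-- **Uniform approximation on compacts by bounded Lipschitz maps.**
Every continuous `f : H → H` on a separable real Hilbert space can be approximated,
uniformly on a compact set `K` and to within `ε`, by a globally Lipschitz map `g`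
whose uniform bound on `H` exceeds `sup_{x ∈ K} ‖f x‖` by at most `ε`. -/
theorem lipschitz_approx_on_compact
    {H : Type*} [NormedAddCommGroup H] [InnerProductSpace ℝ H] [CompleteSpace H]
    [TopologicalSpace.SeparableSpace H]
    (K : Set H) (hK : IsCompact K) (f : H → H) (hf : Continuous f) :
    ∀ ε > (0 : ℝ), ∃ g : H → H,
      (∃ L : NNReal, LipschitzWith L g) ∧
      (∀ x : H, ‖g x‖ ≤ sSup ((fun x => ‖f x‖) '' K) + ε) ∧
      (∀ x ∈ K, ‖g x - f x‖ ≤ ε) := by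
  classical
  intro ε hε
  rcases K.eq_empty_or_nonempty with hKe | hKne
  · refine ⟨fun _ => 0, ⟨0, LipschitzWith.const 0⟩, fun x => ?_, fun x hx => by
      simp [hKe] at hx⟩
    simp [hKe, Real.sSup_empty, hε.le]
  set M : ℝ := sSup ((fun x => ‖f x‖) '' K) with hMdef
  have hMb : BddAbove ((fun x => ‖f x‖) '' K) :=
    (hK.image (continuous_norm.comp hf)).bddAbove
  have hfM : ∀ x ∈ K, ‖f x‖ ≤ M := fun x hx => le_csSup hMb ⟨x, hx, rfl⟩
  obtain ⟨x₀, hx₀⟩ := hKne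
  have hM0 : 0 ≤ M := le_trans (norm_nonneg _) (hfM x₀ hx₀)
  -- uniform continuity on K
  have huc : UniformContinuousOn f K :=
    hK.uniformContinuousOn_of_continuous hf.continuousOn
  rw [Metric.uniformContinuousOn_iff] at huc
  obtain ⟨δ, hδ, hmod⟩ := huc ε hε
  -- finite δ/2-net
  obtain ⟨t, htK, hcov⟩ := hK.elim_nhds_subcover (fun x => Metric.ball x (δ / 2))
    (fun x _ => Metric.ball_mem_nhds x (by positivity))
  -- bump functions
  set ψ : H → H → ℝ := fun i x => max 0 (2 - (2 / δ) * dist x i) with hψdef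
  have hψ0 : ∀ i x, 0 ≤ ψ i x := fun i x => le_max_left _ _
  have hψ2 : ∀ i x, ψ i x ≤ 2 := by
    intro i x
    apply max_le (by norm_num)
    have : 0 ≤ (2 / δ) * dist x i := by positivity
    linarith
  have hψlip : ∀ i : H, LipschitzWith ((2 / δ).toNNReal) (ψ i) := by
    intro i
    apply LipschitzWith.const_max
    rw [lipschitzWith_iff_dist_le_mul]
    intro x y
    rw [Real.dist_eq]
    have h1 : |(2 - 2 / δ * dist x i) - (2 - 2 / δ * dist y i)|
        = (2 / δ) * |dist x i - dist y i| := by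
      rw [show (2 - 2 / δ * dist x i) - (2 - 2 / δ * dist y i)
          = (2 / δ) * (dist y i - dist x i) by ring, abs_mul,
        abs_of_pos (by positivity : (0:ℝ) < 2 / δ), abs_sub_comm]
    rw [h1]
    have h2 : |dist x i - dist y i| ≤ dist x y := abs_dist_sub_le x y i
    have h3 : ((2 / δ).toNNReal : ℝ) = 2 / δ :=
      Real.coe_toNNReal _ (by positivity)
    rw [h3]
    exact mul_le_mul_of_nonneg_left h2 (by positivity)
  set S : H → ℝ := fun x => ∑ i ∈ t, ψ i x with hSdef
  set D : H → ℝ := fun x => max 1 (S x) with hDdef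
  have hD1 : ∀ x, 1 ≤ D x := fun x => le_max_left _ _
  have hSD : ∀ x, S x ≤ D x := fun x => le_max_right _ _
  have hD0 : ∀ x, 0 < D x := fun x => lt_of_lt_of_le one_pos (hD1 x)
  obtain ⟨LS, hSlip⟩ : ∃ L : NNReal, LipschitzWith L S :=
    exists_lip_sum t ψ (fun i _ => ⟨_, hψlip i⟩)
  have hDlip : LipschitzWith LS D := hSlip.const_max 1
  have hDinvlip : LipschitzWith LS (fun x => (D x)⁻¹) := lip_inv_of_one_le hDlip hD1
  have hDinv_le : ∀ x, |(D x)⁻¹| ≤ 1 := by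
    intro x
    rw [abs_of_pos (inv_pos.mpr (hD0 x))]
    exact inv_le_one_of_one_le₀ (hD1 x)
  set φ : H → H → ℝ := fun i x => ψ i x * (D x)⁻¹ with hφdef
  have hφ0 : ∀ i x, 0 ≤ φ i x := fun i x =>
    mul_nonneg (hψ0 i x) (inv_pos.mpr (hD0 x)).le
  have hφlip : ∀ i : H, ∃ L : NNReal, LipschitzWith L (φ i) := by
    intro i
    exact exists_lip_mul (hψlip i) hDinvlip
      (fun x => by rw [abs_of_nonneg (hψ0 i x)]; exact hψ2 i x) hDinv_le
  have hφsum_le : ∀ x, ∑ i ∈ t, φ i x ≤ 1 := by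
    intro x
    have : ∑ i ∈ t, φ i x = S x * (D x)⁻¹ := by
      rw [hSdef]; simp [hφdef, Finset.sum_mul]
    rw [this]
    rw [← div_eq_mul_inv]
    exact div_le_one_of_le₀ (hSD x) (hD0 x).le
  set g : H → H := fun x => ∑ i ∈ t, φ i x • f i with hgdef
  refine ⟨g, ?_, ?_, ?_⟩
  · exact exists_lip_sum t (fun i x => φ i x • f i)
      (fun i _ => let ⟨L, hL⟩ := hφlip i; ⟨L * ‖f i‖₊, lip_smul_const hL (f i)⟩)
  · intro x
    have h1 : ‖g x‖ ≤ ∑ i ∈ t, φ i x * ‖f i‖ := by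
      refine (norm_sum_le _ _).trans (Finset.sum_le_sum fun i _ => ?_)
      rw [norm_smul, Real.norm_eq_abs, abs_of_nonneg (hφ0 i x)]
    have h2 : ∑ i ∈ t, φ i x * ‖f i‖ ≤ ∑ i ∈ t, φ i x * M :=
      Finset.sum_le_sum fun i hi =>
        mul_le_mul_of_nonneg_left (hfM i (htK i hi)) (hφ0 i x)
    have h3 : ∑ i ∈ t, φ i x * M = (∑ i ∈ t, φ i x) * M := (Finset.sum_mul _ _ _).symm
    have h4 : (∑ i ∈ t, φ i x) * M ≤ 1 * M :=
      mul_le_mul_of_nonneg_right (hφsum_le x) hM0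
    calc ‖g x‖ ≤ ∑ i ∈ t, φ i x * ‖f i‖ := h1
      _ ≤ (∑ i ∈ t, φ i x) * M := by rw [← h3]; exact h2
      _ ≤ M := by linarith
      _ ≤ M + ε := by linarith
  · intro x hx
    -- there is a center within δ/2
    obtain ⟨i₀, hi₀t, hi₀⟩ : ∃ i₀ ∈ t, x ∈ Metric.ball i₀ (δ / 2) := by
      have := hcov hx
      simpa using this
    have hdi₀ : dist x i₀ < δ / 2 := Metric.mem_ball.mp hi₀
    have hψi₀ : 1 ≤ ψ i₀ x := by
      have : (2 / δ) * dist x i₀ ≤ 1 := by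
        rw [div_mul_eq_mul_div, div_le_one hδ]
        nlinarith [dist_nonneg (x := x) (y := i₀)]
      refine le_max_of_le_right (by linarith)
    have hS1 : 1 ≤ S x :=
      hψi₀.trans (Finset.single_le_sum (fun i _ => hψ0 i x) hi₀t)
    have hDS : D x = S x := max_eq_right hS1
    have hS0 : S x ≠ 0 := by positivity
    have hφsum1 : ∑ i ∈ t, φ i x = 1 := by
      have : ∑ i ∈ t, φ i x = S x * (D x)⁻¹ := by
        rw [hSdef]; simp [hφdef, Finset.sum_mul]
      rw [this, hDS, mul_inv_cancel₀ hS0]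
    have hdiff : g x - f x = ∑ i ∈ t, φ i x • (f i - f x) := by
      have : ∑ i ∈ t, φ i x • (f i - f x)
          = (∑ i ∈ t, φ i x • f i) - (∑ i ∈ t, φ i x) • f x := by
        rw [Finset.sum_smul]
        rw [← Finset.sum_sub_distrib]
        congr 1
        ext i
        rw [smul_sub]
      rw [this, hφsum1, one_smul, hgdef]
    rw [hdiff]
    have hterm : ∀ i ∈ t, ‖φ i x • (f i - f x)‖ ≤ φ i x * ε := by
      intro i hi
      rw [norm_smul, Real.norm_eq_abs, abs_of_nonneg (hφ0 i x)]
      rcases eq_or_lt_of_le (hψ0 i x) with h0 | hpos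
      · have : φ i x = 0 := by rw [hφdef]; simp [← h0]
        simp [this]
      · -- ψ i x > 0 forces dist x i < δ
        have hdist : dist x i < δ := by
          by_contra hcon
          push_neg at hcon
          have : 2 - (2 / δ) * dist x i ≤ 0 := by
            have : (2 / δ) * δ ≤ (2 / δ) * dist x i :=
              mul_le_mul_of_nonneg_left hcon (by positivity)
            rw [div_mul_cancel₀] at this
            · linarith
            · exact ne_of_gt hδ
          have : ψ i x = 0 := max_eq_left this
          rw [this] at hpos
          exact lt_irrefl 0 hpos
        have hfe : dist (f x) (f i) < ε := hmod x hx i (htK i hi) hdist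
        have : ‖f i - f x‖ = dist (f x) (f i) := by
          rw [dist_eq_norm, ← norm_neg]; congr 1; abel
        rw [this]
        exact mul_le_mul_of_nonneg_left hfe.le (hφ0 i x)
    calc ‖∑ i ∈ t, φ i x • (f i - f x)‖ ≤ ∑ i ∈ t, ‖φ i x • (f i - f x)‖ :=
          norm_sum_le _ _
      _ ≤ ∑ i ∈ t, φ i x * ε := Finset.sum_le_sum hterm
      _ = (∑ i ∈ t, φ i x) * ε := (Finset.sum_mul _ _ _).symm
      _ = ε := by rw [hφsum1, one_mul]
end
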